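/- Let w : ℝ → ℝ be (b−a)-periodic and square-integrable on [a,b], and s > 0. Then ∫_a^b (1/s)(w(x) − w(x−s)) w(x) dx = (1/2) ∫_a^b (1/s)(w(x+s) − w(x))² dx. -/

import Mathlib

open MeasureTheory

private lemma per_int_step (f : ℝ → ℝ) (T : ℝ) (hf : Function.Periodic f T)
    (a : ℝ) (hi : IntervalIntegrable f volume a (a + T)) (n : ℤ) :
    IntervalIntegrable f volume (a + n * T) (a + n * T + T) := by
  have h := hi.comp_sub_right (n * T)
  have hfun : (fun x => f (x - n * T)) = f := funext fun x => hf.sub_int_mul_eq n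
  rw [hfun] at h
  have : (a + T) + n * T = a + n * T + T := by ring
  rwa [this] at h

private lemma per_int_chain (f : ℝ → ℝ) (T : ℝ) (hf : Function.Periodic f T)
    (a : ℝ) (hi : IntervalIntegrable f volume a (a + T)) (m n : ℤ) (hmn : m ≤ n) :
    IntervalIntegrable f volume (a + m * T) (a + n * T) := by
  refine Int.le_induction (motive := fun k _ => IntervalIntegrable f volume (a + m * T) (a + k * T)) ?_ ?_ n hmn
  · simp [IntervalIntegrable, Set.Ioc_self]
  · intro n _ ih
    have h2 := per_int_step f T hf a hi n
    have he : a + ((n + 1 : ℤ) : ℝ) * T = a + n * T + T := by push_cast; ring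
    rw [he]
    exact ih.trans h2

private lemma per_int (f : ℝ → ℝ) (T : ℝ) (hT : 0 < T) (hf : Function.Periodic f T)
    (a : ℝ) (hi : IntervalIntegrable f volume a (a + T)) (c d : ℝ) :
    IntervalIntegrable f volume c d := by
  set m : ℤ := ⌊(min c d - a) / T⌋ with hm
  set n : ℤ := ⌈(max c d - a) / T⌉ with hn
  have h1 : a + (m : ℝ) * T ≤ min c d := by
    have h := mul_le_mul_of_nonneg_right (Int.floor_le ((min c d - a) / T)) hT.le
    rw [div_mul_cancel₀ _ hT.ne'] at h
    linarith
  have h2 : max c d ≤ a + (n : ℝ) * T := by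
    have h := mul_le_mul_of_nonneg_right (Int.le_ceil ((max c d - a) / T)) hT.le
    rw [div_mul_cancel₀ _ hT.ne'] at h
    linarith
  have hmn : m ≤ n := by
    have huv : (min c d - a) / T ≤ (max c d - a) / T := by
      have hmm : c ⊓ d - a ≤ c ⊔ d - a := by
        have := min_le_max (a := c) (b := d); linarith
      gcongr
    exact (Int.floor_mono huv).trans (Int.floor_le_ceil _)
  have hlr : a + (m : ℝ) * T ≤ a + (n : ℝ) * T := by
    have : (m : ℝ) * T ≤ (n : ℝ) * T := by
      have : (m : ℝ) ≤ (n : ℝ) := by exact_mod_cast hmn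
      nlinarith
    linarith
  have h := per_int_chain f T hf a hi m n hmn
  apply h.mono_set
  apply Set.uIcc_subset_uIcc <;> rw [Set.uIcc_of_le hlr] <;> constructor
  · exact h1.trans (min_le_left _ _)
  · exact (le_max_left _ _).trans h2
  · exact h1.trans (min_le_right _ _)
  · exact (le_max_right _ _).trans h2

set_option maxHeartbeats 1000000 in
theorem stmt2 (a b s : ℝ) (hab : a < b) (hs : 0 < s)
    (w : ℝ → ℝ) (hw : Function.Periodic w (b - a))
    (hwmeas : Measurable w)
    (hw2 : IntervalIntegrable (fun x => (w x) ^ 2) volume a b) :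
    (∫ x in a..b, (1 / s) * (w x - w (x - s)) * w x)
      = (1 / 2) * ∫ x in a..b, (1 / s) * (w (x + s) - w x) ^ 2 := by
  have hT : 0 < b - a := by linarith
  have hwsq : Function.Periodic (fun x => (w x) ^ 2) (b - a) := fun x => by simp [hw x]
  have hab' : a + (b - a) = b := by ring
  have hsq_any : ∀ c d : ℝ, IntervalIntegrable (fun x => (w x) ^ 2) volume c d :=
    per_int _ _ hT hwsq a (by rwa [hab'])
  -- integrability of shifted squares on a..b
  have hsq_sub : IntervalIntegrable (fun x => (w (x - s)) ^ 2) volume a b := by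
    have := (hsq_any (a - s) (b - s)).comp_sub_right s
    simpa using this
  have hsq_add : IntervalIntegrable (fun x => (w (x + s)) ^ 2) volume a b := by
    have := (hsq_any (a + s) (b + s)).comp_add_right s
    simpa using this
  -- integrability of products
  have hmeas_sub : Measurable (fun x => w x * w (x - s)) :=
    hwmeas.mul (hwmeas.comp (measurable_id.sub measurable_const))
  have hmeas_add : Measurable (fun x => w (x + s) * w x) :=
    (hwmeas.comp (measurable_id.add measurable_const)).mul hwmeas
  have hprod_sub : IntervalIntegrable (fun x => w x * w (x - s)) volume a b := by
    refine IntervalIntegrable.mono_fun' ((hw2.add hsq_sub).div_const 2)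
      hmeas_sub.aestronglyMeasurable ?_
    filter_upwards with x
    simp only [Real.norm_eq_abs]
    exact abs_le.mpr ⟨by nlinarith [sq_nonneg (w x + w (x - s))],
      by nlinarith [sq_nonneg (w x - w (x - s))]⟩
  have hprod_add : IntervalIntegrable (fun x => w (x + s) * w x) volume a b := by
    refine IntervalIntegrable.mono_fun' ((hsq_add.add hw2).div_const 2)
      hmeas_add.aestronglyMeasurable ?_
    filter_upwards with x
    simp only [Real.norm_eq_abs]
    exact abs_le.mpr ⟨by nlinarith [sq_nonneg (w (x + s) + w x)],
      by nlinarith [sq_nonneg (w (x + s) - w x)]⟩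
  -- translation identities
  have hper_prod : Function.Periodic (fun x => w x * w (x - s)) (b - a) := by
    intro x
    simp only
    rw [hw x, show x + (b - a) - s = (x - s) + (b - a) by ring, hw (x - s)]
  have hD : (∫ x in a..b, (w (x + s)) ^ 2) = ∫ x in a..b, (w x) ^ 2 := by
    rw [intervalIntegral.integral_comp_add_right (fun x => (w x) ^ 2) s]
    have := hwsq.intervalIntegral_add_eq (a + s) a
    rw [show a + s + (b - a) = b + s by ring, hab'] at this
    exact this
  have hC : (∫ x in a..b, w (x + s) * w x) = ∫ x in a..b, w x * w (x - s) := by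
    have heq : (∫ x in a..b, w (x + s) * w x)
        = ∫ x in a + s..b + s, w x * w (x - s) := by
      rw [← intervalIntegral.integral_comp_add_right (fun x => w x * w (x - s)) s]
      congr 1
      ext x
      simp
    rw [heq]
    have := hper_prod.intervalIntegral_add_eq (a + s) a
    rw [show a + s + (b - a) = b + s by ring, hab'] at this
    exact this
  -- expand both sides
  have hL : (∫ x in a..b, (1 / s) * (w x - w (x - s)) * w x)
      = (1 / s) * ((∫ x in a..b, (w x) ^ 2) - ∫ x in a..b, w x * w (x - s)) := by
    rw [← intervalIntegral.integral_sub hw2 hprod_sub, ← intervalIntegral.integral_const_mul]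
    congr 1; ext x; ring
  have hR : (∫ x in a..b, (1 / s) * (w (x + s) - w x) ^ 2)
      = (1 / s) * (((∫ x in a..b, (w (x + s)) ^ 2)
          - 2 * ∫ x in a..b, w (x + s) * w x) + ∫ x in a..b, (w x) ^ 2) := by
    rw [← intervalIntegral.integral_const_mul 2 _, ← intervalIntegral.integral_sub hsq_add
      ((hprod_add.const_mul 2)), ← intervalIntegral.integral_add (hsq_add.sub (hprod_add.const_mul 2)) hw2,
      ← intervalIntegral.integral_const_mul]
    congr 1; ext x; ring
  rw [hL, hR, hD, hC]
  ring
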